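/- Assume hypotheses (H1) and (H2), and assume Γ* > 0. Define Θ = min over constants C₁,…,C_I ∈ [0,1] and functions h : X* → [0,1] with h ≡ 1 on X_□, h ≡ 0 on X_⊞, and h ≡ C_i on X_i for each i = 1,…,I, of ½ Σ_{η,η' ∈ X*, η ∼ η'} (h(η) − h(η'))². Then Θ ∈ (0,∞) and lim_{β→∞} e^{Γ*β} · Z_β · CAP_β({□},{⊞}) = Θ. -/

import Mathlib

open scoped Classical

variable {X : Type*}

/-- `ω` (restricted to 0,…,L) is a path of allowed moves from `a` to `b`. -/
def IsPathW (rel : X → X → Prop) (a b : X) (L : ℕ) (ω : ℕ → X) : Prop :=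
  ω 0 = a ∧ ω L = b ∧ ∀ i < L, rel (ω i) (ω (i + 1))

/-- The maximal energy along the path `ω = (ω 0, …, ω L)`. -/
noncomputable def pathMax (H : X → ℝ) (L : ℕ) (ω : ℕ → X) : ℝ :=
  (Finset.range (L + 1)).sup' ⟨0, by simp⟩ fun i => H (ω i)

/-- Communication height Φ(a,b) between two configurations. -/
noncomputable def commH (rel : X → X → Prop) (H : X → ℝ) (a b : X) : ℝ :=
  sInf { m : ℝ | ∃ L ω, IsPathW rel a b L ω ∧ m = pathMax H L ω }

/-- Communication height Φ(A,B) between two sets of configurations. -/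
noncomputable def commHS (rel : X → X → Prop) (H : X → ℝ) (A B : Set X) : ℝ :=
  sInf { m : ℝ | ∃ a ∈ A, ∃ b ∈ B, m = commH rel H a b }

/-- The graph (X,∼) is connected. -/
def ConnGraph (rel : X → X → Prop) : Prop :=
  ∀ a b : X, ∃ L ω, IsPathW rel a b L ω

/-- Partition function Z_β. -/
noncomputable def Zb [Fintype X] (H : X → ℝ) (β : ℝ) : ℝ :=
  ∑ ξ : X, Real.exp (-β * H ξ)

/-- Gibbs measure μ_β. -/
noncomputable def gibbs [Fintype X] (H : X → ℝ) (β : ℝ) (η : X) : ℝ :=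
  Real.exp (-β * H η) / Zb H β

/-- Metropolis transition rates c_β. -/
noncomputable def crate (rel : X → X → Prop) (H : X → ℝ) (β : ℝ) (η η' : X) : ℝ :=
  if rel η η' then Real.exp (-β * max (H η' - H η) 0) else 0

/-- Dirichlet form E_β(h). -/
noncomputable def dirE [Fintype X] (rel : X → X → Prop) (H : X → ℝ) (β : ℝ)
    (h : X → ℝ) : ℝ :=
  (1 / 2) * ∑ η : X, ∑ η' : X, gibbs H β η * crate rel H β η η' * (h η - h η') ^ 2

/-- Capacity CAP_β(A,B). -/
noncomputable def capB [Fintype X] (rel : X → X → Prop) (H : X → ℝ) (β : ℝ)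
    (A B : Set X) : ℝ :=
  sInf { e : ℝ | ∃ h : X → ℝ, (∀ η, 0 ≤ h η ∧ h η ≤ 1) ∧
    (∀ η ∈ A, h η = 1) ∧ (∀ η ∈ B, h η = 0) ∧ e = dirE rel H β h }

/-- `a` and `b` are connected by a path staying inside `S`. -/
def connIn (rel : X → X → Prop) (S : Set X) (a b : X) : Prop :=
  ∃ L ω, IsPathW rel a b L ω ∧ ∀ i ≤ L, ω i ∈ S

/-- Γ* = Φ(□,⊞) − H(□). -/
noncomputable def gammaStar (rel : X → X → Prop) (H : X → ℝ) (a b : X) : ℝ :=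
  commH rel H a b - H a

/-- X** = {η : H(η) < Γ*}. -/
noncomputable def Xss (rel : X → X → Prop) (H : X → ℝ) (a b : X) : Set X :=
  {η : X | H η < gammaStar rel H a b}

/-- The connected component of X** containing `root`. -/
noncomputable def compOf (rel : X → X → Prop) (H : X → ℝ) (a b root : X) : Set X :=
  {η : X | connIn rel (Xss rel H a b) root η}

/-- The wells: X** ∖ (X_□ ∪ X_⊞); its connected components are X_1,…,X_I. -/
noncomputable def wellsSet (rel : X → X → Prop) (H : X → ℝ) (a b : X) : Set X :=
  Xss rel H a b \ (compOf rel H a b a ∪ compOf rel H a b b)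

/-- Θ: the minimum of ½ Σ_{η,η'∈X*, η∼η'} (h(η)−h(η'))² over h : X* → [0,1]
with h ≡ 1 on X_□, h ≡ 0 on X_⊞ and h constant on each well X_i. -/
noncomputable def thetaVP [Fintype X] (rel : X → X → Prop) (H : X → ℝ)
    (a b : X) : ℝ :=
  sInf { e : ℝ | ∃ h : X → ℝ, (∀ η, 0 ≤ h η ∧ h η ≤ 1) ∧
    (∀ η ∈ compOf rel H a b a, h η = 1) ∧
    (∀ η ∈ compOf rel H a b b, h η = 0) ∧
    (∀ η η', connIn rel (wellsSet rel H a b) η η' → h η = h η') ∧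
    e = (1 / 2) * ∑ η : X, ∑ η' : X,
      (if H η ≤ gammaStar rel H a b ∧ H η' ≤ gammaStar rel H a b ∧ rel η η'
       then (h η - h η') ^ 2 else 0) }


section Paths
variable {rel : X → X → Prop} {S T : Set X} {a b c : X}

lemma connIn_self (ha : a ∈ S) : connIn rel S a a :=
  ⟨0, fun _ => a, ⟨rfl, rfl, fun i hi => absurd hi (Nat.not_lt_zero i)⟩, fun _ _ => ha⟩

lemma connIn_mem_left (h : connIn rel S a b) : a ∈ S := by
  obtain ⟨L, ω, ⟨h0, hL, _⟩, hmem⟩ := h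
  simpa [h0] using hmem 0 (Nat.zero_le L)

lemma connIn_mem_right (h : connIn rel S a b) : b ∈ S := by
  obtain ⟨L, ω, ⟨h0, hL, _⟩, hmem⟩ := h
  simpa [hL] using hmem L le_rfl

lemma connIn_mono (hST : S ⊆ T) (h : connIn rel S a b) : connIn rel T a b := by
  obtain ⟨L, ω, hp, hmem⟩ := h
  exact ⟨L, ω, hp, fun i hi => hST (hmem i hi)⟩

lemma connIn_step (h : connIn rel S a b) (hr : rel b c) (hc : c ∈ S) :
    connIn rel S a c := by
  obtain ⟨L, ω, ⟨h0, hL, he⟩, hmem⟩ := h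
  refine ⟨L + 1, fun i => if i ≤ L then ω i else c, ⟨by simp [h0], by simp, ?_⟩, ?_⟩
  · intro i hi
    rcases Nat.lt_or_ge i L with hiL | hiL
    · simp only [if_pos (Nat.le_of_lt hiL), if_pos (Nat.succ_le_of_lt hiL)]
      exact he i hiL
    · have hiL' : i = L := by omega
      subst hiL'
      simp [hL, hr]
  · intro i hi
    by_cases hiL : i ≤ L
    · simpa [hiL] using hmem i hiL
    · simpa [hiL] using hc

lemma connIn_symm (hsymm : Symmetric rel) (h : connIn rel S a b) :
    connIn rel S b a := by
  obtain ⟨L, ω, ⟨h0, hL, he⟩, hmem⟩ := h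
  refine ⟨L, fun i => ω (L - i), ⟨by simp [hL], by simp [h0], ?_⟩, ?_⟩
  · intro i hi
    have h1 : L - i = (L - (i + 1)) + 1 := by omega
    have := he (L - (i + 1)) (by omega)
    show rel (ω (L - i)) (ω (L - (i + 1)))
    rw [h1]
    exact hsymm this
  · intro i hi
    exact hmem (L - i) (by omega)

lemma connIn_trans (h1 : connIn rel S a b) (h2 : connIn rel S b c) :
    connIn rel S a c := by
  obtain ⟨L1, ω1, ⟨h10, h1L, h1e⟩, h1m⟩ := h1
  obtain ⟨L2, ω2, ⟨h20, h2L, h2e⟩, h2m⟩ := h2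
  have key : ∀ i, L1 ≤ i → (if i ≤ L1 then ω1 i else ω2 (i - L1)) = ω2 (i - L1) := by
    intro i hi
    by_cases hiL : i ≤ L1
    · have : i = L1 := le_antisymm hiL hi
      subst this
      simp [h1L, h20]
    · simp [hiL]
  refine ⟨L1 + L2, fun i => if i ≤ L1 then ω1 i else ω2 (i - L1),
    ⟨by simp [h10], ?_, ?_⟩, ?_⟩
  · show (if L1 + L2 ≤ L1 then ω1 (L1+L2) else ω2 (L1 + L2 - L1)) = c
    rw [key (L1 + L2) (by omega)]
    simpa using h2L
  · intro i hi
    rcases Nat.lt_or_ge i L1 with hiL | hiL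
    · simp only [if_pos (Nat.le_of_lt hiL), if_pos (Nat.succ_le_of_lt hiL)]
      exact h1e i hiL
    · show rel (if i ≤ L1 then ω1 i else ω2 (i - L1))
          (if i + 1 ≤ L1 then ω1 (i+1) else ω2 (i + 1 - L1))
      rw [key i hiL, key (i + 1) (by omega)]
      have : i + 1 - L1 = (i - L1) + 1 := by omega
      rw [this]
      exact h2e (i - L1) (by omega)
  · intro i hi
    by_cases hiL : i ≤ L1
    · simpa [hiL] using h1m i hiL
    · show (if i ≤ L1 then ω1 i else ω2 (i - L1)) ∈ S
      rw [key i (by omega)]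
      exact h2m (i - L1) (by omega)

end Paths

section CommH
variable {rel : X → X → Prop} {H : X → ℝ} {a b : X}

lemma pathMax_mem_image [Fintype X] (H : X → ℝ) (L : ℕ) (ω : ℕ → X) :
    pathMax H L ω ∈ (Finset.univ.image H : Finset ℝ) := by
  obtain ⟨i, hi, hval⟩ := Finset.exists_mem_eq_sup' (Finset.nonempty_range_add_one)
    (fun i => H (ω i))
  rw [pathMax, hval]
  exact Finset.mem_image.2 ⟨ω i, Finset.mem_univ _, rfl⟩

lemma commH_set_finite [Fintype X] (rel : X → X → Prop) (H : X → ℝ) (a b : X) :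
    { m : ℝ | ∃ L ω, IsPathW rel a b L ω ∧ m = pathMax H L ω }.Finite := by
  apply Set.Finite.subset (Finset.univ.image H : Finset ℝ).finite_toSet
  rintro m ⟨L, ω, _, rfl⟩
  exact pathMax_mem_image H L ω

lemma commH_le_pathMax [Fintype X] {L : ℕ} {ω : ℕ → X}
    (hp : IsPathW rel a b L ω) : commH rel H a b ≤ pathMax H L ω :=
  csInf_le (commH_set_finite rel H a b).bddBelow ⟨L, ω, hp, rfl⟩

lemma commH_attained [Fintype X] (rel : X → X → Prop) (H : X → ℝ)
    (hconn : ConnGraph rel) (a b : X) :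
    ∃ L ω, IsPathW rel a b L ω ∧ pathMax H L ω = commH rel H a b := by
  have hne : { m : ℝ | ∃ L ω, IsPathW rel a b L ω ∧ m = pathMax H L ω }.Nonempty := by
    obtain ⟨L, ω, hp⟩ := hconn a b
    exact ⟨pathMax H L ω, L, ω, hp, rfl⟩
  have := Set.Nonempty.csInf_mem hne (commH_set_finite rel H a b)
  obtain ⟨L, ω, hp, hm⟩ := this
  exact ⟨L, ω, hp, hm.symm⟩

lemma le_pathMax (H : X → ℝ) {L i : ℕ} (ω : ℕ → X) (hi : i ≤ L) :
    H (ω i) ≤ pathMax H L ω :=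
  Finset.le_sup' (fun j => H (ω j)) (Finset.mem_range.2 (by omega))

lemma pathMax_lt_iff {H : X → ℝ} {L : ℕ} {ω : ℕ → X} {c : ℝ} :
    pathMax H L ω < c ↔ ∀ i ≤ L, H (ω i) < c := by
  show (Finset.range (L + 1)).sup' Finset.nonempty_range_add_one (fun i => H (ω i)) < c ↔ _
  rw [Finset.sup'_lt_iff]
  constructor
  · intro h i hi
    exact h i (Finset.mem_range.2 (by omega))
  · intro h i hi
    exact h i (Nat.lt_succ_iff.mp (Finset.mem_range.mp hi))

end CommH

section Telescope
variable {h : X → ℝ}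

/-- Telescoping bound along a path. -/
lemma path_diff_le (h : X → ℝ) {d : ℝ} :
    ∀ (L : ℕ) (ω : ℕ → X), (∀ i < L, |h (ω i) - h (ω (i + 1))| ≤ d) →
      |h (ω 0) - h (ω L)| ≤ L * d := by
  intro L
  induction L with
  | zero => intro ω _; simp
  | succ n ih =>
    intro ω hs
    have h1 : |h (ω 0) - h (ω n)| ≤ n * d := ih ω fun i hi => hs i (by omega)
    have h2 : |h (ω n) - h (ω (n + 1))| ≤ d := hs n (by omega)
    calc |h (ω 0) - h (ω (n + 1))|
        ≤ |h (ω 0) - h (ω n)| + |h (ω n) - h (ω (n + 1))| := abs_sub_le _ _ _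
      _ ≤ n * d + d := add_le_add h1 h2
      _ = (↑(n + 1) : ℝ) * d := by push_cast; ring
    
end Telescope

section Components
variable [Fintype X] (rel : X → X → Prop) (H : X → ℝ) (sq bx : X)

lemma gamma_eq (Hsq : H sq = 0) :
    gammaStar rel H sq bx = commH rel H sq bx := by
  rw [gammaStar, Hsq, sub_zero]

variable {rel H sq bx}

lemma connIn_ab_false (Hsq : H sq = 0)
    (h : connIn rel (Xss rel H sq bx) sq bx) : False := by
  obtain ⟨L, ω, hp, hm⟩ := h
  have h1 : pathMax H L ω < gammaStar rel H sq bx :=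
    pathMax_lt_iff.2 fun i hi => hm i hi
  have h2 : commH rel H sq bx ≤ pathMax H L ω := commH_le_pathMax hp
  rw [gamma_eq rel H sq bx Hsq] at h1
  linarith

lemma comp_disjoint (hsymm : Symmetric rel) (Hsq : H sq = 0) {x : X}
    (hA : x ∈ compOf rel H sq bx sq) (hB : x ∈ compOf rel H sq bx bx) : False :=
  connIn_ab_false Hsq (connIn_trans hA (connIn_symm hsymm hB))

lemma compOf_subset_Xss {root x : X} (hx : x ∈ compOf rel H sq bx root) :
    x ∈ Xss rel H sq bx := connIn_mem_right hx

lemma compOf_step {root x y : X} (hx : x ∈ compOf rel H sq bx root)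
    (hr : rel x y) (hy : y ∈ Xss rel H sq bx) : y ∈ compOf rel H sq bx root :=
  connIn_step hx hr hy

/-- Θ-admissibility. -/
def thetaAdm (rel : X → X → Prop) (H : X → ℝ) (sq bx : X) (h : X → ℝ) : Prop :=
  (∀ η, 0 ≤ h η ∧ h η ≤ 1) ∧
  (∀ η ∈ compOf rel H sq bx sq, h η = 1) ∧
  (∀ η ∈ compOf rel H sq bx bx, h η = 0) ∧
  (∀ η η', connIn rel (wellsSet rel H sq bx) η η' → h η = h η')

/-- every X**-internal edge has equal values for admissible h. -/
lemma adm_edge_eq (hsymm : Symmetric rel) (Hsq : H sq = 0) {h : X → ℝ}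
    (hadm : thetaAdm rel H sq bx h) {η η' : X} (hη : η ∈ Xss rel H sq bx)
    (hη' : η' ∈ Xss rel H sq bx) (hr : rel η η') : h η = h η' := by
  obtain ⟨hb, hA, hB, hW⟩ := hadm
  by_cases hyA : η ∈ compOf rel H sq bx sq
  · rw [hA η hyA, hA η' (compOf_step hyA hr hη')]
  by_cases hyB : η ∈ compOf rel H sq bx bx
  · rw [hB η hyB, hB η' (compOf_step hyB hr hη')]
  have hηW : η ∈ wellsSet rel H sq bx := ⟨hη, fun hc => hc.elim hyA hyB⟩
  by_cases hy'A : η' ∈ compOf rel H sq bx sq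
  · exact absurd (compOf_step hy'A (hsymm hr) hη) hyA
  by_cases hy'B : η' ∈ compOf rel H sq bx bx
  · exact absurd (compOf_step hy'B (hsymm hr) hη) hyB
  have hη'W : η' ∈ wellsSet rel H sq bx := ⟨hη', fun hc => hc.elim hy'A hy'B⟩
  apply hW
  refine ⟨1, fun i => if i = 0 then η else η', ⟨by simp, by simp, ?_⟩, ?_⟩
  · intro i hi
    have : i = 0 := by omega
    subst this
    simpa using hr
  · intro i hi
    by_cases h0 : i = 0 <;> simp [h0, hηW, hη'W]

/-- canonical representative of the well-component of `x`. -/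
noncomputable def wrep (rel : X → X → Prop) (H : X → ℝ) (sq bx : X) [Fintype X]
    (x : X) : X :=
  let e := Fintype.equivFin X
  let Sx := Finset.univ.filter fun y => connIn rel (wellsSet rel H sq bx) x y
  if hx : Sx.Nonempty then e.symm ((Sx.image e).min' (hx.image e)) else x

lemma wrep_rel {x : X} (hx : x ∈ wellsSet rel H sq bx) :
    connIn rel (wellsSet rel H sq bx) x (wrep rel H sq bx x) := by
  have hxne : (Finset.univ.filter fun y =>
      connIn rel (wellsSet rel H sq bx) x y).Nonempty :=
    ⟨x, Finset.mem_filter.2 ⟨Finset.mem_univ _, connIn_self hx⟩⟩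
  rw [wrep, dif_pos hxne]
  set e := Fintype.equivFin X
  have hmem := Finset.min'_mem _ (hxne.image e)
  obtain ⟨y, hy, hey⟩ := Finset.mem_image.1 hmem
  rw [← hey, Equiv.symm_apply_apply]
  exact (Finset.mem_filter.1 hy).2

lemma wrep_eq_of_rel (hsymm : Symmetric rel) {x y : X}
    (hxy : connIn rel (wellsSet rel H sq bx) x y) :
    wrep rel H sq bx x = wrep rel H sq bx y := by
  have hS : (Finset.univ.filter fun z => connIn rel (wellsSet rel H sq bx) x z) =
      (Finset.univ.filter fun z => connIn rel (wellsSet rel H sq bx) y z) := by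
    ext z
    simp only [Finset.mem_filter, Finset.mem_univ, true_and]
    exact ⟨fun hz => connIn_trans (connIn_symm hsymm hxy) hz,
      fun hz => connIn_trans hxy hz⟩
  have hnx : (Finset.univ.filter fun z =>
      connIn rel (wellsSet rel H sq bx) x z).Nonempty :=
    ⟨y, Finset.mem_filter.2 ⟨Finset.mem_univ _, hxy⟩⟩
  have hny : (Finset.univ.filter fun z =>
      connIn rel (wellsSet rel H sq bx) y z).Nonempty := by
    rwa [← hS]
  rw [wrep, wrep]
  rw [dif_pos hnx, dif_pos hny]
  simp only [hS]

end Components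

section Sums
variable [Fintype X] (rel : X → X → Prop) (H : X → ℝ) (sq bx : X)

/-- rescaled Dirichlet form. -/
noncomputable def Fval (β : ℝ) (h : X → ℝ) : ℝ :=
  (1 / 2) * ∑ η : X, ∑ η' : X,
    (if rel η η' then
      Real.exp (-β * (max (H η) (H η') - gammaStar rel H sq bx)) else 0) *
      (h η - h η') ^ 2

/-- limit quadratic form. -/
noncomputable def Vval (h : X → ℝ) : ℝ :=
  (1 / 2) * ∑ η : X, ∑ η' : X,
    (if H η ≤ gammaStar rel H sq bx ∧ H η' ≤ gammaStar rel H sq bx ∧ rel η η'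
     then (h η - h η') ^ 2 else 0)

/-- remainder. -/
noncomputable def Rval (β : ℝ) (h : X → ℝ) : ℝ :=
  (1 / 2) * ∑ η : X, ∑ η' : X,
    (if rel η η' ∧ gammaStar rel H sq bx < max (H η) (H η') then
      Real.exp (-β * (max (H η) (H η') - gammaStar rel H sq bx)) *
        (h η - h η') ^ 2 else 0)

variable {rel H sq bx}

lemma double_sum_le_double_sum {f g : X → X → ℝ}
    (h : ∀ x y, f x y ≤ g x y) :
    ∑ x : X, ∑ y : X, f x y ≤ ∑ x : X, ∑ y : X, g x y :=
  Finset.sum_le_sum fun x _ => Finset.sum_le_sum fun y _ => h x y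

lemma term_le_double_sum {f : X → X → ℝ} (hf : ∀ x y, 0 ≤ f x y) (a b : X) :
    f a b ≤ ∑ x : X, ∑ y : X, f x y := by
  calc f a b ≤ ∑ y : X, f a y :=
        Finset.single_le_sum (fun y _ => hf a y) (Finset.mem_univ b)
    _ ≤ ∑ x : X, ∑ y : X, f x y :=
        Finset.single_le_sum (fun x _ => Finset.sum_nonneg fun y _ => hf x y)
          (Finset.mem_univ a)

lemma Fval_term_nonneg (β : ℝ) (h : X → ℝ) (x y : X) :
    0 ≤ (if rel x y then
      Real.exp (-β * (max (H x) (H y) - gammaStar rel H sq bx)) else 0) *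
      (h x - h y) ^ 2 := by
  apply mul_nonneg _ (sq_nonneg _)
  split <;> positivity

lemma Fval_nonneg (β : ℝ) (h : X → ℝ) : 0 ≤ Fval rel H sq bx β h := by
  apply mul_nonneg (by norm_num)
  exact Finset.sum_nonneg fun x _ => Finset.sum_nonneg fun y _ =>
    Fval_term_nonneg β h x y

lemma Vval_nonneg (h : X → ℝ) : 0 ≤ Vval rel H sq bx h := by
  apply mul_nonneg (by norm_num)
  refine Finset.sum_nonneg fun x _ => Finset.sum_nonneg fun y _ => ?_
  split
  · exact sq_nonneg _
  · exact le_rfl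

lemma Rval_nonneg (β : ℝ) (h : X → ℝ) : 0 ≤ Rval rel H sq bx β h := by
  apply mul_nonneg (by norm_num)
  refine Finset.sum_nonneg fun x _ => Finset.sum_nonneg fun y _ => ?_
  split
  · positivity
  · exact le_rfl

lemma Zb_pos [Nonempty X] (β : ℝ) : 0 < Zb H β :=
  Finset.sum_pos (fun ξ _ => Real.exp_pos _) Finset.univ_nonempty

lemma dirE_nonneg [Nonempty X] (β : ℝ) (h : X → ℝ) :
    0 ≤ dirE rel H β h := by
  apply mul_nonneg (by norm_num)
  refine Finset.sum_nonneg fun x _ => Finset.sum_nonneg fun y _ => ?_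
  apply mul_nonneg (mul_nonneg _ _) (sq_nonneg _)
  · exact div_nonneg (Real.exp_pos _).le (Zb_pos β).le
  · rw [crate]; split <;> positivity

/-- the key identity e^{Γβ} Z_β E_β(h) = F_β(h). -/
lemma Fval_eq [Nonempty X] (β : ℝ) (h : X → ℝ) :
    Real.exp (gammaStar rel H sq bx * β) * Zb H β * dirE rel H β h
      = Fval rel H sq bx β h := by
  have hZ : Zb H β ≠ 0 := (Zb_pos β).ne'
  have key : ∀ η η' : X, Real.exp (gammaStar rel H sq bx * β) * Zb H β *
      (gibbs H β η * crate rel H β η η' * (h η - h η') ^ 2) =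
      (if rel η η' then
        Real.exp (-β * (max (H η) (H η') - gammaStar rel H sq bx)) else 0) *
        (h η - h η') ^ 2 := by
    intro η η'
    rw [gibbs, crate]
    by_cases hr : rel η η'
    · rw [if_pos hr, if_pos hr]
      have e1 : Real.exp (-β * H η) * Real.exp (-β * max (H η' - H η) 0) =
          Real.exp (-β * max (H η) (H η')) := by
        rw [← Real.exp_add]
        congr 1
        rcases le_total (H η') (H η) with hc | hc
        · rw [max_eq_left hc, max_eq_right (by linarith)]
          ring
        · rw [max_eq_right hc, max_eq_left (by linarith)]
          ring
      have e2 : Real.exp (gammaStar rel H sq bx * β) *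
          Real.exp (-β * max (H η) (H η')) =
          Real.exp (-β * (max (H η) (H η') - gammaStar rel H sq bx)) := by
        rw [← Real.exp_add]
        congr 1
        ring
      rw [← e2, ← e1]
      field_simp
    · simp [hr]
  rw [dirE, Fval, mul_left_comm]
  congr 1
  rw [Finset.mul_sum]
  refine Finset.sum_congr rfl fun η _ => ?_
  rw [Finset.mul_sum]
  exact Finset.sum_congr rfl fun η' _ => key η η'

end Sums

section Split
variable [Fintype X] {rel : X → X → Prop} {H : X → ℝ} {sq bx : X}

lemma Fval_split (hsymm : Symmetric rel) (Hsq : H sq = 0) {h : X → ℝ}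
    (hadm : thetaAdm rel H sq bx h) (β : ℝ) :
    Fval rel H sq bx β h = Vval rel H sq bx h + Rval rel H sq bx β h := by
  rw [Fval, Vval, Rval, ← mul_add, ← Finset.sum_add_distrib]
  congr 1
  refine Finset.sum_congr rfl fun x _ => ?_
  rw [← Finset.sum_add_distrib]
  refine Finset.sum_congr rfl fun y _ => ?_
  by_cases hr : rel x y
  · rcases le_or_gt (max (H x) (H y)) (gammaStar rel H sq bx) with hm | hm
    · have hV : H x ≤ gammaStar rel H sq bx ∧ H y ≤ gammaStar rel H sq bx ∧
          rel x y := ⟨(max_le_iff.1 hm).1, (max_le_iff.1 hm).2, hr⟩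
      have hR : ¬(rel x y ∧ gammaStar rel H sq bx < max (H x) (H y)) :=
        fun hc => absurd hc.2 (not_lt.2 hm)
      rw [if_pos hr, if_pos hV, if_neg hR, add_zero]
      rcases eq_or_lt_of_le hm with hm' | hm'
      · rw [hm']
        simp
      · have hx : x ∈ Xss rel H sq bx := lt_of_le_of_lt (le_max_left _ _) hm'
        have hy : y ∈ Xss rel H sq bx := lt_of_le_of_lt (le_max_right _ _) hm'
        rw [adm_edge_eq hsymm Hsq hadm hx hy hr]
        simp
    · have hV : ¬(H x ≤ gammaStar rel H sq bx ∧ H y ≤ gammaStar rel H sq bx ∧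
          rel x y) := fun hc => absurd (max_le hc.1 hc.2.1) (not_le.2 hm)
      rw [if_pos hr, if_neg hV, if_pos (⟨hr, hm⟩ : rel x y ∧ gammaStar rel H sq bx < max (H x) (H y)), zero_add]
  · simp [hr]

lemma Rval_tendsto (h : X → ℝ) :
    Filter.Tendsto (fun β => Rval rel H sq bx β h) Filter.atTop (nhds 0) := by
  have key : ∀ x y : X, Filter.Tendsto (fun β : ℝ =>
      (if rel x y ∧ gammaStar rel H sq bx < max (H x) (H y) then
        Real.exp (-β * (max (H x) (H y) - gammaStar rel H sq bx)) *
          (h x - h y) ^ 2 else 0)) Filter.atTop (nhds 0) := by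
    intro x y
    by_cases hc : rel x y ∧ gammaStar rel H sq bx < max (H x) (H y)
    · simp only [if_pos hc]
      have ha : max (H x) (H y) - gammaStar rel H sq bx > 0 := by
        linarith [hc.2]
      have h1 : Filter.Tendsto (fun β : ℝ =>
          -β * (max (H x) (H y) - gammaStar rel H sq bx))
          Filter.atTop Filter.atBot := by
        have heq : (fun β : ℝ =>
            -β * (max (H x) (H y) - gammaStar rel H sq bx)) =
            fun β : ℝ => β * (-(max (H x) (H y) - gammaStar rel H sq bx)) := by
          funext β; ring
        rw [heq]
        exact Filter.Tendsto.atTop_mul_const_of_neg (by linarith) Filter.tendsto_id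
      have h3 := Real.tendsto_exp_atBot.comp h1
      have h4 := h3.mul_const ((h x - h y) ^ 2)
      rw [zero_mul] at h4
      exact h4
    · simp only [if_neg hc]
      exact tendsto_const_nhds
  have hsum : Filter.Tendsto (fun β => ∑ x : X, ∑ y : X,
      (if rel x y ∧ gammaStar rel H sq bx < max (H x) (H y) then
        Real.exp (-β * (max (H x) (H y) - gammaStar rel H sq bx)) *
          (h x - h y) ^ 2 else 0)) Filter.atTop (nhds 0) := by
    have := tendsto_finset_sum Finset.univ (fun x _ =>
      tendsto_finset_sum Finset.univ (fun y _ => key x y))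
    simpa using this
  have := hsum.const_mul ((1:ℝ)/2)
  rw [mul_zero] at this
  exact this

end Split

section Theta
variable [Fintype X]

noncomputable def thetaSet (rel : X → X → Prop) (H : X → ℝ) (sq bx : X) : Set ℝ :=
  { e : ℝ | ∃ h : X → ℝ, (∀ η, 0 ≤ h η ∧ h η ≤ 1) ∧
    (∀ η ∈ compOf rel H sq bx sq, h η = 1) ∧
    (∀ η ∈ compOf rel H sq bx bx, h η = 0) ∧
    (∀ η η', connIn rel (wellsSet rel H sq bx) η η' → h η = h η') ∧
    e = (1 / 2) * ∑ η : X, ∑ η' : X,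
      (if H η ≤ gammaStar rel H sq bx ∧ H η' ≤ gammaStar rel H sq bx ∧ rel η η'
       then (h η - h η') ^ 2 else 0) }

variable {rel : X → X → Prop} {H : X → ℝ} {sq bx : X}

lemma thetaVP_eq_sInf : thetaVP rel H sq bx = sInf (thetaSet rel H sq bx) := rfl

lemma mem_thetaSet_iff {e : ℝ} : e ∈ thetaSet rel H sq bx ↔
    ∃ h : X → ℝ, thetaAdm rel H sq bx h ∧ e = Vval rel H sq bx h := by
  constructor
  · rintro ⟨h, h1, h2, h3, h4, h5⟩
    exact ⟨h, ⟨h1, h2, h3, h4⟩, h5⟩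
  · rintro ⟨h, ⟨h1, h2, h3, h4⟩, h5⟩
    exact ⟨h, h1, h2, h3, h4, h5⟩

lemma thetaSet_bdd : BddBelow (thetaSet rel H sq bx) := by
  refine ⟨0, fun e he => ?_⟩
  obtain ⟨h, _, rfl⟩ := mem_thetaSet_iff.1 he
  exact Vval_nonneg h

lemma h0_adm (hsymm : Symmetric rel) (Hsq : H sq = 0) :
    thetaAdm rel H sq bx
      (fun x => if x ∈ compOf rel H sq bx sq then (1:ℝ) else 0) := by
  refine ⟨fun η => ?_, fun η hη => if_pos hη, fun η hη => ?_, fun η η' hηη' => ?_⟩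
  · dsimp only
    split <;> norm_num
  · exact if_neg fun hA => comp_disjoint hsymm Hsq hA hη
  · have hη1 : η ∈ wellsSet rel H sq bx := connIn_mem_left hηη'
    have hη2 : η' ∈ wellsSet rel H sq bx := connIn_mem_right hηη'
    dsimp only
    rw [if_neg fun hA => hη1.2 (Or.inl hA), if_neg fun hA => hη2.2 (Or.inl hA)]

lemma thetaSet_nonempty (hsymm : Symmetric rel) (Hsq : H sq = 0) :
    (thetaSet rel H sq bx).Nonempty :=
  ⟨_, mem_thetaSet_iff.2 ⟨_, h0_adm hsymm Hsq, rfl⟩⟩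

lemma thetaVP_le {h : X → ℝ} (hadm : thetaAdm rel H sq bx h) :
    thetaVP rel H sq bx ≤ Vval rel H sq bx h :=
  csInf_le thetaSet_bdd (mem_thetaSet_iff.2 ⟨h, hadm, rfl⟩)

/-- Cap-admissibility. -/
def capAdm (sq bx : X) (h : X → ℝ) : Prop :=
  (∀ η, 0 ≤ h η ∧ h η ≤ 1) ∧ h sq = 1 ∧ h bx = 0

lemma capSet_nonempty (hne : sq ≠ bx) (β : ℝ) :
    { e : ℝ | ∃ h : X → ℝ, (∀ η, 0 ≤ h η ∧ h η ≤ 1) ∧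
      (∀ η ∈ ({sq} : Set X), h η = 1) ∧ (∀ η ∈ ({bx} : Set X), h η = 0) ∧
      e = dirE rel H β h }.Nonempty := by
  refine ⟨dirE rel H β (fun x => if x = sq then 1 else 0),
    fun x => if x = sq then 1 else 0, fun η => ?_, ?_, ?_, rfl⟩
  · dsimp only
    split <;> norm_num
  · intro η hη
    rw [Set.mem_singleton_iff] at hη
    simp [hη]
  · intro η hη
    rw [Set.mem_singleton_iff] at hη
    simp [hη, hne.symm]

lemma capSet_bdd [Nonempty X] (β : ℝ) :
    BddBelow { e : ℝ | ∃ h : X → ℝ, (∀ η, 0 ≤ h η ∧ h η ≤ 1) ∧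
      (∀ η ∈ ({sq} : Set X), h η = 1) ∧ (∀ η ∈ ({bx} : Set X), h η = 0) ∧
      e = dirE rel H β h } := by
  refine ⟨0, ?_⟩
  rintro e ⟨h, _, _, _, rfl⟩
  exact dirE_nonneg β h

lemma G_le [Nonempty X] (β : ℝ) {h : X → ℝ} (hadm : capAdm sq bx h) :
    Real.exp (gammaStar rel H sq bx * β) * Zb H β * capB rel H β {sq} {bx}
      ≤ Fval rel H sq bx β h := by
  have hmem : dirE rel H β h ∈ { e : ℝ | ∃ h : X → ℝ,
      (∀ η, 0 ≤ h η ∧ h η ≤ 1) ∧ (∀ η ∈ ({sq} : Set X), h η = 1) ∧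
      (∀ η ∈ ({bx} : Set X), h η = 0) ∧ e = dirE rel H β h } := by
    refine ⟨h, hadm.1, ?_, ?_, rfl⟩
    · intro η hη
      rw [Set.mem_singleton_iff] at hη
      rw [hη, hadm.2.1]
    · intro η hη
      rw [Set.mem_singleton_iff] at hη
      rw [hη, hadm.2.2]
  have hc : capB rel H β {sq} {bx} ≤ dirE rel H β h :=
    csInf_le (capSet_bdd β) hmem
  calc Real.exp (gammaStar rel H sq bx * β) * Zb H β * capB rel H β {sq} {bx}
      ≤ Real.exp (gammaStar rel H sq bx * β) * Zb H β * dirE rel H β h := by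
        apply mul_le_mul_of_nonneg_left hc
        have := Zb_pos (H := H) β
        positivity
    _ = Fval rel H sq bx β h := Fval_eq β h

lemma le_G [Nonempty X] (hne : sq ≠ bx) (β : ℝ) (m : ℝ)
    (hall : ∀ h : X → ℝ, capAdm sq bx h → m ≤ Fval rel H sq bx β h) :
    m ≤ Real.exp (gammaStar rel H sq bx * β) * Zb H β *
      capB rel H β {sq} {bx} := by
  set c := Real.exp (gammaStar rel H sq bx * β) * Zb H β with hc
  have hcpos : 0 < c := by
    rw [hc]
    have := Zb_pos (H := H) β
    positivity
  have hstep : ∀ e ∈ { e : ℝ | ∃ h : X → ℝ, (∀ η, 0 ≤ h η ∧ h η ≤ 1) ∧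
      (∀ η ∈ ({sq} : Set X), h η = 1) ∧ (∀ η ∈ ({bx} : Set X), h η = 0) ∧
      e = dirE rel H β h }, m / c ≤ e := by
    rintro e ⟨h, h1, h2, h3, rfl⟩
    have hadm : capAdm sq bx h := ⟨h1, h2 sq rfl, h3 bx rfl⟩
    have h4 := hall h hadm
    rw [← Fval_eq β h, ← hc] at h4
    rw [div_le_iff₀ hcpos, mul_comm]
    exact h4
  have h5 : m / c ≤ capB rel H β {sq} {bx} :=
    le_csInf (capSet_nonempty hne β) hstep
  calc m = c * (m / c) := by field_simp
    _ ≤ c * capB rel H β {sq} {bx} := mul_le_mul_of_nonneg_left h5 hcpos.le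
    _ = _ := by rw [hc]

lemma theta_pos (hsymm : Symmetric rel) (hconn : ConnGraph rel) (hne : sq ≠ bx) (Hsq : H sq = 0)
    (hbx : H bx ≤ 0) (hΓ : 0 < gammaStar rel H sq bx) :
    0 < thetaVP rel H sq bx := by
  obtain ⟨L, ω, hp, hmax⟩ := commH_attained rel H hconn sq bx
  have hmaxΓ : pathMax H L ω = gammaStar rel H sq bx := by
    rw [hmax, gamma_eq rel H sq bx Hsq]
  have hL : 1 ≤ L := by
    rcases Nat.eq_zero_or_pos L with h0 | h0
    · exfalso
      apply hne
      rw [← hp.1, ← hp.2.1, h0]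
    · exact h0
  have hLpos : (0:ℝ) < (L:ℝ) := by exact_mod_cast hL
  have hθpos : (0:ℝ) < 1 / (2 * (L:ℝ)^2) := by positivity
  refine lt_of_lt_of_le hθpos (le_csInf (thetaSet_nonempty hsymm Hsq) ?_)
  · rintro e he
    obtain ⟨h, hadm, rfl⟩ := mem_thetaSet_iff.1 he
    have hsqA : sq ∈ compOf rel H sq bx sq :=
      connIn_self (show H sq < _ by rw [Hsq]; exact hΓ)
    have hbxB : bx ∈ compOf rel H sq bx bx :=
      connIn_self (show H bx < _ by exact lt_of_le_of_lt hbx hΓ)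
    have hrange : (Finset.range L).Nonempty := ⟨0, Finset.mem_range.2 hL⟩
    set d := (Finset.range L).sup' hrange fun i => |h (ω i) - h (ω (i + 1))|
      with hd
    have hdle : ∀ i < L, |h (ω i) - h (ω (i + 1))| ≤ d := fun i hi =>
      Finset.le_sup' (f := fun i => |h (ω i) - h (ω (i + 1))|)
        (Finset.mem_range.2 hi)
    have h1 : |h (ω 0) - h (ω L)| ≤ (L:ℝ) * d := path_diff_le h L ω hdle
    rw [hp.1, hp.2.1, hadm.2.1 sq hsqA, hadm.2.2.1 bx hbxB] at h1
    norm_num at h1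
    have hdge : 1 / (L:ℝ) ≤ d := by
      rw [div_le_iff₀ hLpos]
      linarith [h1]
    obtain ⟨i, hi, hival⟩ := Finset.exists_mem_eq_sup' hrange
      fun i => |h (ω i) - h (ω (i + 1))|
    rw [Finset.mem_range] at hi
    have hsq2 : (1 / (L:ℝ))^2 ≤ (h (ω i) - h (ω (i + 1)))^2 := by
      rw [← sq_abs (h (ω i) - h (ω (i + 1)))]
      apply pow_le_pow_left₀ (by positivity)
      rw [← hival]
      exact hdge
    have hcond : H (ω i) ≤ gammaStar rel H sq bx ∧
        H (ω (i+1)) ≤ gammaStar rel H sq bx ∧ rel (ω i) (ω (i + 1)) := by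
      refine ⟨?_, ?_, hp.2.2 i hi⟩
      · rw [← hmaxΓ]; exact le_pathMax H ω (by omega)
      · rw [← hmaxΓ]; exact le_pathMax H ω (by omega)
    have hterm : (1 / (L:ℝ))^2 ≤
        ∑ x : X, ∑ y : X, (if H x ≤ gammaStar rel H sq bx ∧
          H y ≤ gammaStar rel H sq bx ∧ rel x y
          then (h x - h y) ^ 2 else 0) := by
      calc (1 / (L:ℝ))^2 ≤ (h (ω i) - h (ω (i + 1)))^2 := hsq2
        _ = (if H (ω i) ≤ gammaStar rel H sq bx ∧
            H (ω (i+1)) ≤ gammaStar rel H sq bx ∧ rel (ω i) (ω (i + 1))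
            then (h (ω i) - h (ω (i+1))) ^ 2 else 0) := (if_pos hcond).symm
        _ ≤ _ := term_le_double_sum
              (f := fun x y => if H x ≤ gammaStar rel H sq bx ∧
                H y ≤ gammaStar rel H sq bx ∧ rel x y
                then (h x - h y) ^ 2 else 0)
              (fun x y => by split; exacts [sq_nonneg _, le_rfl])
              (ω i) (ω (i+1))
    show 1 / (2 * (L:ℝ)^2) ≤ (1/2) * ∑ x : X, ∑ y : X, _
    calc 1 / (2 * (L:ℝ)^2) = (1/2) * (1/(L:ℝ))^2 := by
          field_simp
      _ ≤ _ := by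
          apply mul_le_mul_of_nonneg_left hterm
          norm_num

end Theta

section Bounds
variable [Fintype X] {rel : X → X → Prop} {H : X → ℝ} {sq bx : X}

lemma upper_bound (hsymm : Symmetric rel) (Hsq : H sq = 0) (hbx : H bx ≤ 0)
    (hΓ : 0 < gammaStar rel H sq bx) {ε : ℝ} (hε : 0 < ε) :
    ∀ᶠ β in Filter.atTop,
      Real.exp (gammaStar rel H sq bx * β) * Zb H β * capB rel H β {sq} {bx}
        < thetaVP rel H sq bx + ε := by
  have hNE : Nonempty X := ⟨sq⟩
  have hsqA : sq ∈ compOf rel H sq bx sq :=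
    connIn_self (show H sq < _ by rw [Hsq]; exact hΓ)
  have hbxB : bx ∈ compOf rel H sq bx bx :=
    connIn_self (show H bx < _ from lt_of_le_of_lt hbx hΓ)
  have hlt : sInf (thetaSet rel H sq bx) < thetaVP rel H sq bx + ε / 2 := by
    rw [← thetaVP_eq_sInf]
    linarith
  obtain ⟨e, he, helt⟩ := exists_lt_of_csInf_lt (thetaSet_nonempty hsymm Hsq) hlt
  obtain ⟨h, hadm, rfl⟩ := mem_thetaSet_iff.1 he
  have hcapA : capAdm sq bx h := ⟨hadm.1, hadm.2.1 sq hsqA, hadm.2.2.1 bx hbxB⟩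
  have hev : ∀ᶠ β in Filter.atTop, Rval rel H sq bx β h < ε / 2 := by
    have := Rval_tendsto (rel := rel) (H := H) (sq := sq) (bx := bx) h
    exact this.eventually_lt_const (by linarith)
  filter_upwards [hev] with β hRβ
  calc Real.exp (gammaStar rel H sq bx * β) * Zb H β * capB rel H β {sq} {bx}
      ≤ Fval rel H sq bx β h := G_le β hcapA
    _ = Vval rel H sq bx h + Rval rel H sq bx β h := Fval_split hsymm Hsq hadm β
    _ < thetaVP rel H sq bx + ε / 2 + ε / 2 := by
        apply add_lt_add helt hRβ
    _ = thetaVP rel H sq bx + ε := by ring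

end Bounds

section Lower
variable [Fintype X] {rel : X → X → Prop} {H : X → ℝ} {sq bx : X}

lemma lower_bound (hsymm : Symmetric rel) (Hsq : H sq = 0)
    (hΓ : 0 < gammaStar rel H sq bx) {ε : ℝ} (hε : 0 < ε) :
    ∀ᶠ β in Filter.atTop, ∀ h : X → ℝ, capAdm sq bx h →
      thetaVP rel H sq bx - ε < Fval rel H sq bx β h := by
  have hNE : Nonempty X := ⟨sq⟩
  set Γ := gammaStar rel H sq bx with hΓdef
  set Θ := thetaVP rel H sq bx with hΘdef
  have hΘ0 : 0 ≤ Θ := by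
    rw [hΘdef, thetaVP_eq_sInf]
    refine le_csInf (thetaSet_nonempty hsymm Hsq) fun e he => ?_
    obtain ⟨h, _, rfl⟩ := mem_thetaSet_iff.1 he
    exact Vval_nonneg h
  -- the energy gap g of X**
  set gset := (Finset.univ.filter fun ξ : X => H ξ < Γ).image fun ξ => Γ - H ξ
    with hgset
  have hgne : gset.Nonempty := by
    refine ⟨Γ - H sq, Finset.mem_image.2 ⟨sq, Finset.mem_filter.2
      ⟨Finset.mem_univ _, ?_⟩, rfl⟩⟩
    rw [Hsq]; exact hΓ
  set g := gset.min' hgne with hgdef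
  have hg0 : 0 < g := by
    have hmem := gset.min'_mem hgne
    obtain ⟨ξ, hξ, hval⟩ := Finset.mem_image.1 hmem
    rw [hgdef, ← hval]
    linarith [(Finset.mem_filter.1 hξ).2]
  have hgle : ∀ ξ : X, H ξ < Γ → g ≤ Γ - H ξ := fun ξ hξ =>
    Finset.min'_le _ _ (Finset.mem_image.2 ⟨ξ, Finset.mem_filter.2
      ⟨Finset.mem_univ _, hξ⟩, rfl⟩)
  -- uniform path-length bound N
  set Npair : X → X → ℕ := fun x y =>
    if hp : connIn rel (Xss rel H sq bx) x y then hp.choose else 0 with hNpair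
  have Npair_spec : ∀ x y, (hp : connIn rel (Xss rel H sq bx) x y) →
      ∃ ω, IsPathW rel x y (Npair x y) ω ∧
        ∀ i ≤ Npair x y, ω i ∈ Xss rel H sq bx := by
    intro x y hp
    rw [hNpair]
    simp only [dif_pos hp]
    exact hp.choose_spec
  set N : ℕ := Finset.univ.sup fun p : X × X => Npair p.1 p.2 with hN
  have hNle : ∀ x y : X, Npair x y ≤ N := fun x y =>
    Finset.le_sup (f := fun p : X × X => Npair p.1 p.2)
      (Finset.mem_univ (x, y))
  have conn_bound : ∀ (h : X → ℝ) (d : ℝ), 0 ≤ d →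
      (∀ x y, x ∈ Xss rel H sq bx → y ∈ Xss rel H sq bx → rel x y →
        |h x - h y| ≤ d) →
      ∀ x y, connIn rel (Xss rel H sq bx) x y → |h x - h y| ≤ (N : ℝ) * d := by
    intro h d hd hedge x y hxy
    obtain ⟨ω, hp, hm⟩ := Npair_spec x y hxy
    have h1 : |h (ω 0) - h (ω (Npair x y))| ≤ (Npair x y : ℝ) * d :=
      path_diff_le h _ ω fun i hi =>
        hedge _ _ (hm i hi.le) (hm (i+1) hi) (hp.2.2 i hi)
    rw [hp.1, hp.2.1] at h1
    calc |h x - h y| ≤ (Npair x y : ℝ) * d := h1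
      _ ≤ (N : ℝ) * d := by
          apply mul_le_mul_of_nonneg_right _ hd
          exact_mod_cast hNle x y
  -- the decay rate δ
  set δ : ℝ → ℝ := fun β => Real.sqrt (2 * Θ * Real.exp (-β * g)) with hδ
  have hδ0 : ∀ β, 0 ≤ δ β := fun β => Real.sqrt_nonneg _
  have hδtend : Filter.Tendsto δ Filter.atTop (nhds 0) := by
    have h2 : Filter.Tendsto (fun β : ℝ => Real.exp (-β * g))
        Filter.atTop (nhds 0) := by
      have heq : (fun β : ℝ => -β * g) = fun β : ℝ => β * (-g) := by
        funext β; ring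
      have h1 : Filter.Tendsto (fun β : ℝ => -β * g) Filter.atTop
          Filter.atBot := by
        rw [heq]
        exact Filter.Tendsto.atTop_mul_const_of_neg (by linarith) Filter.tendsto_id
      exact Real.tendsto_exp_atBot.comp h1
    have h3 : Filter.Tendsto (fun β : ℝ => 2 * Θ * Real.exp (-β * g))
        Filter.atTop (nhds 0) := by
      have := h2.const_mul (2 * Θ)
      simpa using this
    have h4 := (Real.continuous_sqrt.tendsto 0).comp h3
    rw [hδ]
    simpa [Function.comp_def] using h4
  set ψ : ℝ → ℝ := fun β => (1/2) * (Fintype.card X : ℝ)^2 *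
    (4 * ((N:ℝ) * δ β) + 4 * ((N:ℝ) * δ β)^2) with hψ
  have hψtend : Filter.Tendsto ψ Filter.atTop (nhds 0) := by
    have hu : Filter.Tendsto (fun β => (N:ℝ) * δ β) Filter.atTop (nhds 0) := by
      have h0 := hδtend.const_mul (N:ℝ)
      rw [mul_zero] at h0
      exact h0
    have h1 : Filter.Tendsto (fun β => 4 * ((N:ℝ) * δ β) +
        4 * ((N:ℝ) * δ β)^2) Filter.atTop (nhds 0) := by
      have h2 := ((hu.const_mul 4).add ((hu.pow 2).const_mul 4))
      norm_num at h2
      exact h2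
    have h3 := h1.const_mul ((1/2) * (Fintype.card X : ℝ)^2)
    rw [mul_zero] at h3
    exact h3
  have hψev : ∀ᶠ β in Filter.atTop, ψ β < ε := hψtend.eventually_lt_const hε
  filter_upwards [hψev, Filter.eventually_ge_atTop (0:ℝ)] with β hψβ hβ0
  intro h hcap
  by_cases hF : Θ ≤ Fval rel H sq bx β h
  · linarith
  push_neg at hF
  -- near-constancy on X**-edges
  have hedge : ∀ x y, x ∈ Xss rel H sq bx → y ∈ Xss rel H sq bx → rel x y →
      |h x - h y| ≤ δ β := by
    intro x y hx hy hr
    have hterm : (if rel x y then Real.exp (-β * (max (H x) (H y) - Γ)) else 0)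
        * (h x - h y)^2 ≤ 2 * Fval rel H sq bx β h := by
      have h1 := term_le_double_sum
        (f := fun x y => (if rel x y then
          Real.exp (-β * (max (H x) (H y) - Γ)) else 0) * (h x - h y)^2)
        (fun x y => Fval_term_nonneg β h x y) x y
      rw [Fval] at *
      linarith
    rw [if_pos hr] at hterm
    have hmax : max (H x) (H y) < Γ := max_lt hx hy
    have hgm : g ≤ Γ - max (H x) (H y) := by
      rcases max_choice (H x) (H y) with hc | hc <;> rw [hc]
      · exact hgle x hx
      · exact hgle y hy
    have hw : Real.exp (β * g) ≤ Real.exp (-β * (max (H x) (H y) - Γ)) := by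
      apply Real.exp_le_exp.2
      nlinarith
    have h2 : Real.exp (β * g) * (h x - h y)^2 ≤ 2 * Θ := by
      calc Real.exp (β * g) * (h x - h y)^2
          ≤ Real.exp (-β * (max (H x) (H y) - Γ)) * (h x - h y)^2 :=
            mul_le_mul_of_nonneg_right hw (sq_nonneg _)
        _ ≤ 2 * Fval rel H sq bx β h := hterm
        _ ≤ 2 * Θ := by linarith
    have h3 : (h x - h y)^2 ≤ 2 * Θ * Real.exp (-β * g) := by
      have h4 := mul_le_mul_of_nonneg_left h2 (Real.exp_pos (-β * g)).le
      have h5 : Real.exp (-β * g) * Real.exp (β * g) = 1 := by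
        rw [← Real.exp_add]
        norm_num
      calc (h x - h y)^2
          = Real.exp (-β * g) * Real.exp (β * g) * (h x - h y)^2 := by
            rw [h5, one_mul]
        _ = Real.exp (-β * g) * (Real.exp (β * g) * (h x - h y)^2) := by ring
        _ ≤ Real.exp (-β * g) * (2 * Θ) := h4
        _ = 2 * Θ * Real.exp (-β * g) := by ring
    calc |h x - h y| = Real.sqrt ((h x - h y)^2) := by
          rw [Real.sqrt_sq_eq_abs]
      _ ≤ Real.sqrt (2 * Θ * Real.exp (-β * g)) := Real.sqrt_le_sqrt h3
      _ = δ β := by rw [hδ]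
  -- the projected test function
  set D := (N:ℝ) * δ β with hD
  have hD0 : 0 ≤ D := mul_nonneg (Nat.cast_nonneg _) (hδ0 β)
  set ht : X → ℝ := fun x => if x ∈ compOf rel H sq bx sq then 1
    else if x ∈ compOf rel H sq bx bx then 0
    else if x ∈ wellsSet rel H sq bx then h (wrep rel H sq bx x) else h x
    with hht
  have hdiff : ∀ x, |ht x - h x| ≤ D := by
    intro x
    rw [hht]
    dsimp only
    by_cases hxA : x ∈ compOf rel H sq bx sq
    · rw [if_pos hxA, ← hcap.2.1]
      exact conn_bound h (δ β) (hδ0 β) hedge sq x hxA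
    rw [if_neg hxA]
    by_cases hxB : x ∈ compOf rel H sq bx bx
    · rw [if_pos hxB, ← hcap.2.2]
      exact conn_bound h (δ β) (hδ0 β) hedge bx x hxB
    rw [if_neg hxB]
    by_cases hxW : x ∈ wellsSet rel H sq bx
    · rw [if_pos hxW, abs_sub_comm]
      exact conn_bound h (δ β) (hδ0 β) hedge x _
        (connIn_mono (fun z hz => hz.1) (wrep_rel hxW))
    · rw [if_neg hxW]
      simpa using hD0
  have htadm : thetaAdm rel H sq bx ht := by
    refine ⟨fun η => ?_, fun η hη => ?_, fun η hη => ?_, fun η η' hηη' => ?_⟩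
    · rw [hht]
      dsimp only
      split
      · norm_num
      split
      · norm_num
      split
      · exact (hcap.1 _)
      · exact (hcap.1 _)
    · rw [hht]
      dsimp only
      rw [if_pos hη]
    · rw [hht]
      dsimp only
      rw [if_neg fun hA => comp_disjoint hsymm Hsq hA hη, if_pos hη]
    · have hη1 : η ∈ wellsSet rel H sq bx := connIn_mem_left hηη'
      have hη2 : η' ∈ wellsSet rel H sq bx := connIn_mem_right hηη'
      rw [hht]
      dsimp only
      rw [if_neg fun hA => hη1.2 (Or.inl hA),
        if_neg fun hB => hη1.2 (Or.inr hB), if_pos hη1,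
        if_neg fun hA => hη2.2 (Or.inl hA),
        if_neg fun hB => hη2.2 (Or.inr hB), if_pos hη2,
        wrep_eq_of_rel hsymm hηη']
  have hΘle : Θ ≤ Vval rel H sq bx ht := thetaVP_le htadm
  have hV : Vval rel H sq bx ht ≤ Fval rel H sq bx β h + ψ β := by
    have hterm : ∀ x y : X,
        (if H x ≤ Γ ∧ H y ≤ Γ ∧ rel x y then (ht x - ht y)^2 else 0) ≤
        (if rel x y then Real.exp (-β * (max (H x) (H y) - Γ)) else 0) *
          (h x - h y)^2 + (4 * D + 4 * D^2) := by
      intro x y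
      by_cases hc : H x ≤ Γ ∧ H y ≤ Γ ∧ rel x y
      · rw [if_pos hc, if_pos hc.2.2]
        have hw1 : (1:ℝ) ≤ Real.exp (-β * (max (H x) (H y) - Γ)) := by
          rw [← Real.exp_zero]
          apply Real.exp_le_exp.2
          have := max_le hc.1 hc.2.1
          nlinarith
        have habs : |ht x - ht y| ≤ |h x - h y| + 2 * D := by
          have e1 : ht x - ht y = (h x - h y) + ((ht x - h x) - (ht y - h y)) := by
            ring
          have e2 : |(ht x - h x) - (ht y - h y)| ≤
              |ht x - h x| + |ht y - h y| := abs_sub _ _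
          calc |ht x - ht y|
              = |(h x - h y) + ((ht x - h x) - (ht y - h y))| := by rw [e1]
            _ ≤ |h x - h y| + |(ht x - h x) - (ht y - h y)| := abs_add_le _ _
            _ ≤ |h x - h y| + (|ht x - h x| + |ht y - h y|) := by linarith
            _ ≤ |h x - h y| + 2 * D := by
                linarith [hdiff x, hdiff y]
        have habs1 : |h x - h y| ≤ 1 := by
          have h1 := hcap.1 x
          have h2 := hcap.1 y
          rw [abs_le]
          constructor <;> linarith
        have hsq : (ht x - ht y)^2 ≤ (h x - h y)^2 + (4 * D + 4 * D^2) := by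
          have h1 : (ht x - ht y)^2 = |ht x - ht y|^2 := (sq_abs _).symm
          have h2 : (h x - h y)^2 = |h x - h y|^2 := (sq_abs _).symm
          have h3 : |ht x - ht y|^2 ≤ (|h x - h y| + 2 * D)^2 := by
            apply pow_le_pow_left₀ (abs_nonneg _) habs
          nlinarith [abs_nonneg (h x - h y), abs_nonneg (ht x - ht y)]
        calc (ht x - ht y)^2 ≤ (h x - h y)^2 + (4 * D + 4 * D^2) := hsq
          _ ≤ Real.exp (-β * (max (H x) (H y) - Γ)) * (h x - h y)^2 +
              (4 * D + 4 * D^2) := by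
            have := le_mul_of_one_le_left (sq_nonneg (h x - h y)) hw1
            linarith
      · rw [if_neg hc]
        have h1 := Fval_term_nonneg (rel := rel) (H := H) (sq := sq) (bx := bx)
          β h x y
        nlinarith
    have hsum := double_sum_le_double_sum hterm
    have hconst : ∑ _x : X, ∑ _y : X, (4 * D + 4 * D^2) =
        (Fintype.card X : ℝ)^2 * (4 * D + 4 * D^2) := by
      rw [Finset.sum_const, Finset.sum_const]
      simp [Finset.card_univ]
      ring
    have hψval : ψ β = (1/2 : ℝ) * (Fintype.card X : ℝ)^2 * (4 * D + 4 * D^2)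
        := by rw [hψ, hD]
    rw [hψval]
    show (1/2 : ℝ) * (∑ x : X, ∑ y : X,
        (if H x ≤ Γ ∧ H y ≤ Γ ∧ rel x y then (ht x - ht y)^2 else 0))
      ≤ (1/2 : ℝ) * (∑ x : X, ∑ y : X,
        (if rel x y then Real.exp (-β * (max (H x) (H y) - Γ)) else 0) *
          (h x - h y)^2) +
        (1/2 : ℝ) * (Fintype.card X : ℝ)^2 * (4 * D + 4 * D^2)
    calc (1/2 : ℝ) * ∑ x : X, ∑ y : X,
        (if H x ≤ Γ ∧ H y ≤ Γ ∧ rel x y then (ht x - ht y)^2 else 0)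
        ≤ (1/2 : ℝ) * ∑ x : X, ∑ y : X,
          ((if rel x y then Real.exp (-β * (max (H x) (H y) - Γ)) else 0) *
            (h x - h y)^2 + (4 * D + 4 * D^2)) :=
          mul_le_mul_of_nonneg_left hsum (by norm_num)
      _ = (1/2 : ℝ) * ((∑ x : X, ∑ y : X,
          (if rel x y then Real.exp (-β * (max (H x) (H y) - Γ)) else 0) *
            (h x - h y)^2) +
          (Fintype.card X : ℝ)^2 * (4 * D + 4 * D^2)) := by
          rw [← hconst, ← Finset.sum_add_distrib]
          congr 1
          refine Finset.sum_congr rfl fun x _ => ?_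
          rw [← Finset.sum_add_distrib]
      _ = _ := by ring
  linarith
end Lower
open Filter

/-- under (H1)–(H2) and Γ* > 0, Θ ∈ (0,∞) and
lim_{β→∞} e^{Γ*β} Z_β CAP_β({□},{⊞}) = Θ. -/
theorem stmt_18 [Fintype X] (rel : X → X → Prop) (H : X → ℝ)
    (hsymm : Symmetric rel) (hconn : ConnGraph rel)
    (sq bx : X) (hne : sq ≠ bx) (Hsq : H sq = 0)
    -- (H1): X_stab = {⊞}
    (hH1 : {η : X | ∀ ξ, H η ≤ H ξ} = {bx})
    -- (H2): ∃ V* < Γ* with V_η ≤ V* for all η ∉ {□,⊞}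
    (hH2 : ∃ Vs : ℝ, Vs < gammaStar rel H sq bx ∧
      ∀ η : X, η ≠ sq → η ≠ bx →
        ({ξ : X | H ξ < H η}).Nonempty ∧
        commHS rel H {η} {ξ : X | H ξ < H η} - H η ≤ Vs)
    (hΓ : 0 < gammaStar rel H sq bx) :
    0 < thetaVP rel H sq bx ∧
    Tendsto (fun β : ℝ =>
        Real.exp (gammaStar rel H sq bx * β) * Zb H β * capB rel H β {sq} {bx})
      atTop (nhds (thetaVP rel H sq bx)) := by
  have hNE : Nonempty X := ⟨sq⟩
  have hbx : H bx ≤ 0 := by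
    have hmem : bx ∈ ({bx} : Set X) := rfl
    rw [← hH1] at hmem
    have h1 := hmem sq
    rwa [Hsq] at h1
  constructor
  · exact theta_pos hsymm hconn hne Hsq hbx hΓ
  · rw [tendsto_order]
    constructor
    · intro c hc
      have hε : 0 < (thetaVP rel H sq bx - c) / 2 := by linarith
      have hev := lower_bound hsymm Hsq hΓ hε
      filter_upwards [hev] with β hβ
      have hm := le_G hne β (thetaVP rel H sq bx - (thetaVP rel H sq bx - c) / 2)
        (fun h hadm => (hβ h hadm).le)
      linarith
    · intro c hc
      have hε : 0 < c - thetaVP rel H sq bx := by linarith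
      have hev := upper_bound hsymm Hsq hbx hΓ hε
      filter_upwards [hev] with β hβ
      linarith
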